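/- Under Assumption I (there is α > 0 with limsup m^α E[T_m] < ∞), for every T > 0, almost surely for all sufficiently large n: max_{1 ≤ k ≤ 2^n T} N_{n,k} < 4^{n/α} n^{2/α}, where N_{n,k} is the number of ancestors at time (k-1)2^{-n} of all particles alive at time k 2^{-n}. -/

import Mathlib

open MeasureTheory Filter
open scoped ENNReal

/-- Under Assumption I (`limsup_m m^α E[T_m] < ∞`), for every `T > 0`, almost surely for
all large `n` we have `max_{1 ≤ k ≤ 2^n T} N_{n,k} < 4^{n/α} n^{2/α}`.  Here `N n k` is
the number of ancestors at time `(k-1)2^{-n}` of all particles alive at time `k 2^{-n}`,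
which has the law of the number of blocks of the `Λ`-coalescent run for time `2^{-n}`,
so that `P(N_{n,k} ≥ M) = P(T_M ≥ 2^{-n})`. -/
theorem ancestor_count_bound_assumptionI {Ω : Type*} [MeasurableSpace Ω]
    (P : Measure Ω) [IsProbabilityMeasure P]
    (α T : ℝ) (hα : 0 < α) (hT : 0 < T)
    (N : ℕ → ℕ → Ω → ℕ) (hNmeas : ∀ n k, Measurable (N n k))
    (Tm : ℕ → Ω → ℝ≥0∞) (hTmeas : ∀ m, Measurable (Tm m))
    (hlink : ∀ n k M : ℕ,
      P {ω | M ≤ N n k ω} = P {ω | ENNReal.ofReal ((2 : ℝ) ^ (-(n : ℝ))) ≤ Tm M ω})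
    (hAI : limsup (fun m : ℕ => (m : ℝ≥0∞) ^ α * ∫⁻ ω, Tm m ω ∂P) atTop < ⊤) :
    ∀ᵐ ω ∂P, ∀ᶠ n : ℕ in atTop, ∀ k : ℕ, 1 ≤ k → (k : ℝ) ≤ 2 ^ n * T →
      (N n k ω : ℝ) < 4 ^ ((n : ℝ) / α) * (n : ℝ) ^ (2 / α) := by
  classical
  -- the bound and its ceiling
  set b : ℕ → ℝ := fun n => 4 ^ ((n : ℝ) / α) * (n : ℝ) ^ (2 / α) with hb
  set M : ℕ → ℕ := fun n => ⌈b n⌉₊ with hM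
  -- the constant C from Assumption I
  set C : ℝ≥0∞ := limsup (fun m : ℕ => (m : ℝ≥0∞) ^ α * ∫⁻ ω, Tm m ω ∂P) atTop + 1 with hCdef
  have hCtop : C ≠ ⊤ := by
    rw [hCdef]
    exact ENNReal.add_ne_top.2 ⟨hAI.ne, ENNReal.one_ne_top⟩
  have hCev : ∀ᶠ m : ℕ in atTop, (m : ℝ≥0∞) ^ α * ∫⁻ ω, Tm m ω ∂P ≤ C := by
    have : limsup (fun m : ℕ => (m : ℝ≥0∞) ^ α * ∫⁻ ω, Tm m ω ∂P) atTop < C := by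
      rw [hCdef]
      exact ENNReal.lt_add_right hAI.ne one_ne_zero
    exact (eventually_lt_of_limsup_lt this).mono fun m hm => hm.le
  obtain ⟨m₀, hm₀⟩ := hCev.exists_forall_of_atTop
  -- the bad events
  set A : ℕ → Set Ω := fun n => {ω | ∃ k : ℕ, 1 ≤ k ∧ (k : ℝ) ≤ 2 ^ n * T ∧ M n ≤ N n k ω}
    with hA
  -- eventually M n ≥ m₀
  have hbn : ∀ n : ℕ, (n : ℝ) ^ (2 / α) ≤ b n := by
    intro n
    have h1 : (1 : ℝ) ≤ 4 ^ ((n : ℝ) / α) :=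
      Real.one_le_rpow (by norm_num) (by positivity)
    calc (n : ℝ) ^ (2 / α) = 1 * (n : ℝ) ^ (2 / α) := (one_mul _).symm
    _ ≤ b n := by
        rw [hb]
        exact mul_le_mul_of_nonneg_right h1 (Real.rpow_nonneg (Nat.cast_nonneg n) _)
  have hMev : ∀ᶠ n : ℕ in atTop, m₀ ≤ M n := by
    have h1 : Tendsto (fun n : ℕ => (n : ℝ) ^ (2 / α)) atTop atTop :=
      (tendsto_rpow_atTop (by positivity)).comp tendsto_natCast_atTop_atTop
    filter_upwards [h1.eventually_ge_atTop (m₀ : ℝ)] with n hn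
    have : (m₀ : ℝ) ≤ b n := hn.trans (hbn n)
    calc m₀ = ⌈(m₀ : ℝ)⌉₊ := (Nat.ceil_natCast m₀).symm
    _ ≤ M n := Nat.ceil_mono this
  -- key bound on P (A n)
  have hP : ∀ᶠ n : ℕ in atTop, P (A n) ≤ C * ENNReal.ofReal (T / (n : ℝ) ^ 2) := by
    filter_upwards [hMev, eventually_ge_atTop 1] with n hMn hn1
    have hn1' : (1 : ℝ) ≤ (n : ℝ) := by exact_mod_cast hn1
    have hbpos : 0 < b n := by
      rw [hb]
      have := Real.rpow_pos_of_pos (by norm_num : (0:ℝ) < 4) ((n : ℝ) / α)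
      have := Real.rpow_pos_of_pos (by linarith : (0:ℝ) < (n:ℝ)) (2 / α)
      positivity
    set Kn : ℕ := ⌊(2 : ℝ) ^ n * T⌋₊ with hKn
    set ε : ℝ≥0∞ := ENNReal.ofReal ((2 : ℝ) ^ (-(n : ℝ))) with hε
    have hεpos : (0 : ℝ) < (2 : ℝ) ^ (-(n : ℝ)) := Real.rpow_pos_of_pos two_pos _
    have hε0 : ε ≠ 0 := by simpa [hε] using hεpos
    have hεtop : ε ≠ ⊤ := ENNReal.ofReal_ne_top
    -- union bound
    have hsub : A n ⊆ ⋃ k ∈ Finset.Icc 1 Kn, {ω | M n ≤ N n k ω} := by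
      rintro ω ⟨k, hk1, hk2, hk3⟩
      exact Set.mem_biUnion (Finset.mem_Icc.2 ⟨hk1, Nat.le_floor hk2⟩) hk3
    have hq : ∀ k : ℕ, P {ω | M n ≤ N n k ω}
        = P {ω | ε ≤ Tm (M n) ω} := fun k => hlink n k (M n)
    have step1 : P (A n) ≤ (Kn : ℝ≥0∞) * P {ω | ε ≤ Tm (M n) ω} := by
      calc P (A n) ≤ P (⋃ k ∈ Finset.Icc 1 Kn, {ω | M n ≤ N n k ω}) := measure_mono hsub
      _ ≤ ∑ k ∈ Finset.Icc 1 Kn, P {ω | M n ≤ N n k ω} := measure_biUnion_finset_le _ _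
      _ = ∑ k ∈ Finset.Icc 1 Kn, P {ω | ε ≤ Tm (M n) ω} := Finset.sum_congr rfl fun k _ => hq k
      _ = (Kn : ℝ≥0∞) * P {ω | ε ≤ Tm (M n) ω} := by
          rw [Finset.sum_const, Nat.card_Icc, nsmul_eq_mul]
          norm_num
    -- Markov
    have markov : P {ω | ε ≤ Tm (M n) ω} ≤ (∫⁻ ω, Tm (M n) ω ∂P) / ε :=
      meas_ge_le_lintegral_div (hTmeas (M n)).aemeasurable hε0 hεtop
    -- Assumption I bound on the integral
    have hMpos : 0 < M n := Nat.ceil_pos.2 hbpos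
    have hMα0 : ((M n : ℝ≥0∞)) ^ α ≠ 0 := by
      apply ne_of_gt
      apply ENNReal.rpow_pos
      · exact_mod_cast hMpos
      · exact ENNReal.natCast_ne_top _
    have hMαtop : ((M n : ℝ≥0∞)) ^ α ≠ ⊤ :=
      ENNReal.rpow_ne_top_of_nonneg hα.le (ENNReal.natCast_ne_top _)
    have hint : (∫⁻ ω, Tm (M n) ω ∂P) ≤ C / ((M n : ℝ≥0∞)) ^ α := by
      rw [ENNReal.le_div_iff_mul_le (Or.inl hMα0) (Or.inl hMαtop)]
      rw [mul_comm]
      exact hm₀ (M n) hMn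
    -- lower bound on (M n)^α
    have hMαge : ENNReal.ofReal ((4 : ℝ) ^ n * (n : ℝ) ^ 2) ≤ ((M n : ℝ≥0∞)) ^ α := by
      have h1 : b n ^ α = (4 : ℝ) ^ n * (n : ℝ) ^ 2 := by
        rw [hb, Real.mul_rpow (by positivity) (by positivity),
          ← Real.rpow_natCast (4 : ℝ) n, ← Real.rpow_mul (by norm_num),
          ← Real.rpow_natCast (n : ℝ) 2]
        rw [← Real.rpow_mul (by positivity), div_mul_cancel₀ _ hα.ne',
          div_mul_cancel₀ _ hα.ne']
        norm_num
      calc ENNReal.ofReal ((4 : ℝ) ^ n * (n : ℝ) ^ 2) = (ENNReal.ofReal (b n)) ^ α := by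
            rw [ENNReal.ofReal_rpow_of_nonneg hbpos.le hα.le, h1]
      _ ≤ ((M n : ℝ≥0∞)) ^ α := by
            apply ENNReal.rpow_le_rpow _ hα.le
            rw [← ENNReal.ofReal_natCast]
            exact ENNReal.ofReal_le_ofReal (Nat.le_ceil _)
    have hd0 : (0 : ℝ) < (4 : ℝ) ^ n * (n : ℝ) ^ 2 := by positivity
    have step2 : (∫⁻ ω, Tm (M n) ω ∂P) ≤ C / ENNReal.ofReal ((4 : ℝ) ^ n * (n : ℝ) ^ 2) :=
      hint.trans (ENNReal.div_le_div_left hMαge C |>.trans_eq rfl) |>.trans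
        (le_refl _)
    -- put everything together
    have hεinv : ε⁻¹ = ENNReal.ofReal ((2 : ℝ) ^ n) := by
      rw [hε, Real.rpow_neg two_pos.le, Real.rpow_natCast,
        ENNReal.ofReal_inv_of_pos (by positivity), inv_inv]
    have hKle : (Kn : ℝ≥0∞) ≤ ENNReal.ofReal ((2 : ℝ) ^ n * T) := by
      rw [← ENNReal.ofReal_natCast]
      exact ENNReal.ofReal_le_ofReal (Nat.floor_le (by positivity))
    set d : ℝ≥0∞ := ENNReal.ofReal ((4 : ℝ) ^ n * (n : ℝ) ^ 2) with hd
    calc P (A n) ≤ (Kn : ℝ≥0∞) * P {ω | ε ≤ Tm (M n) ω} := step1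
    _ ≤ (Kn : ℝ≥0∞) * ((C / d) / ε) :=
        mul_le_mul_right (markov.trans (ENNReal.div_le_div_right step2 ε)) _
    _ = (Kn : ℝ≥0∞) * ε⁻¹ * d⁻¹ * C := by
        rw [div_eq_mul_inv, div_eq_mul_inv]; ring
    _ ≤ ENNReal.ofReal ((2 : ℝ) ^ n * T) * ENNReal.ofReal ((2 : ℝ) ^ n) * d⁻¹ * C := by
        gcongr
        rw [hεinv]
    _ = C * (ENNReal.ofReal ((2 : ℝ) ^ n * T * (2 : ℝ) ^ n) / d) := by
        rw [← ENNReal.ofReal_mul (by positivity), div_eq_mul_inv]; ring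
    _ = C * ENNReal.ofReal ((2 : ℝ) ^ n * T * (2 : ℝ) ^ n / ((4 : ℝ) ^ n * (n : ℝ) ^ 2)) := by
        rw [hd, ENNReal.ofReal_div_of_pos hd0]
    _ = C * ENNReal.ofReal (T / (n : ℝ) ^ 2) := by
        congr 1
        have h4 : (4 : ℝ) ^ n = 2 ^ n * 2 ^ n := by rw [← mul_pow]; norm_num
        have h2n : ((2 : ℝ) ^ n) ≠ 0 := by positivity
        have hnn : ((n : ℝ)) ≠ 0 := by linarith
        rw [h4]; field_simp
  -- Borel-Cantelli
  obtain ⟨n₀, hn₀⟩ := hP.exists_forall_of_atTop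
  set n₁ : ℕ := max n₀ 1 with hn₁
  set g : ℕ → ℝ := fun m => 1 / (m : ℝ) ^ 2 with hg
  have hgsum : Summable (fun i : ℕ => g (i + n₁)) :=
    (summable_nat_add_iff n₁).2 (Real.summable_one_div_nat_pow.2 one_lt_two)
  have hterm : ∀ i : ℕ,
      P (A (i + n₁)) ≤ (C * ENNReal.ofReal T) * ENNReal.ofReal (g (i + n₁)) := by
    intro i
    have h1 : P (A (i + n₁)) ≤ C * ENNReal.ofReal (T / ((i + n₁ : ℕ) : ℝ) ^ 2) :=
      hn₀ (i + n₁) (le_trans (le_max_left _ _) (Nat.le_add_left _ _))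
    refine h1.trans (le_of_eq ?_)
    rw [mul_assoc, ← ENNReal.ofReal_mul hT.le, hg, mul_one_div]
  have hsum : (∑' i : ℕ, P (A (i + n₁))) ≠ ⊤ := by
    have hle : (∑' i : ℕ, P (A (i + n₁)))
        ≤ (C * ENNReal.ofReal T) * ∑' i, ENNReal.ofReal (g (i + n₁)) := by
      rw [← ENNReal.tsum_mul_left]
      exact ENNReal.tsum_le_tsum hterm
    refine ne_top_of_le_ne_top ?_ hle
    have hnn : ∀ i, 0 ≤ g (i + n₁) := fun i => by rw [hg]; positivity
    rw [← ENNReal.ofReal_tsum_of_nonneg hnn hgsum]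
    exact ENNReal.mul_ne_top (ENNReal.mul_ne_top hCtop ENNReal.ofReal_ne_top)
      ENNReal.ofReal_ne_top
  filter_upwards [ae_finite_setOf_mem hsum] with ω hω
  obtain ⟨B, hB⟩ := hω.bddAbove
  rw [eventually_atTop]
  refine ⟨n₁ + B + 1, fun n hn k hk1 hk2 => ?_⟩
  by_contra hcon
  push_neg at hcon
  have hMle : M n ≤ N n k ω := Nat.ceil_le.2 hcon
  have hmem : ω ∈ A n := ⟨k, hk1, hk2, hMle⟩
  have hge : n₁ ≤ n := by omega
  have hmem' : (n - n₁) ∈ {i | ω ∈ A (i + n₁)} := by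
    simpa [Nat.sub_add_cancel hge] using hmem
  have := hB hmem'
  omega
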